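/- arXiv:2203.13460 — 3 statements merged into one kernel-verified Lean document; each statement's English description precedes it below -/
import Mathlib

section
/- Let p be a prime with p ≡ 1 (mod 4), let S* be the nonzero squares and N the non-squares of (ℤ/pℤ)*. Then |N ∩ (N + 1)| = (p - 1)/4, i.e., the number of x such that both x and x - 1 are non-squares equals (p-1)/4. -/
/-- For a prime `p ≡ 1 (mod 4)`, with `N` the non-squares of `(ℤ/pℤ)*`,
the number of `x` such that both `x` and `x - 1` are non-squares equals `(p - 1) / 4`. -/
theorem stmt_2 (p : ℕ) (hp : p.Prime) (hp1 : p % 4 = 1) :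
    Nat.card {x : ZMod p // (x ≠ 0 ∧ ¬ IsSquare x) ∧ (x - 1 ≠ 0 ∧ ¬ IsSquare (x - 1))} =
      (p - 1) / 4 := by
  classical
  haveI : Fact p.Prime := ⟨hp⟩
  have hp5 : 5 ≤ p := by
    have := hp.two_le
    rcases Nat.lt_or_ge p 5 with h | h
    · interval_cases p <;> omega
    · exact h
  have hchar : ringChar (ZMod p) ≠ 2 := by
    rw [ZMod.ringChar_zmod_n]; omega
  set χ := quadraticChar (ZMod p) with hχ
  have hneg1 : χ (-1) = 1 := by
    have hsq : IsSquare (-1 : ZMod p) := ZMod.exists_sq_eq_neg_one_iff.mpr (by omega)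
    exact (quadraticChar_one_iff_isSquare (by
      simp only [ne_eq, neg_eq_zero, one_ne_zero, not_false_eq_true])).mpr hsq
  have hone : χ 1 = 1 := χ.map_one
  set P : ZMod p → Prop := fun x => χ x = -1 ∧ χ (x - 1) = -1 with hP
  set T : Finset (ZMod p) := Finset.univ.filter P with hT
  -- Step 1: the cardinality in question is T.card
  have hcard : Nat.card {x : ZMod p // (x ≠ 0 ∧ ¬ IsSquare x) ∧ (x - 1 ≠ 0 ∧ ¬ IsSquare (x - 1))}
      = T.card := by
    rw [Nat.card_eq_fintype_card, Fintype.card_subtype, hT]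
    congr 1
    apply Finset.filter_congr
    intro x _
    simp only [hP]
    rw [quadraticChar_neg_one_iff_not_isSquare, quadraticChar_neg_one_iff_not_isSquare]
    constructor
    · rintro ⟨⟨-, h1⟩, -, h2⟩; exact ⟨h1, h2⟩
    · rintro ⟨h1, h2⟩
      exact ⟨⟨fun h => h1 (by rw [h]; exact IsSquare.zero), h1⟩,
        ⟨fun h => h2 (by rw [h]; exact IsSquare.zero), h2⟩⟩
  -- key character sum
  have hS : ∑ x : ZMod p, χ x * χ (x - 1) = -1 := by
    have h0 : χ (0 : ZMod p) * χ (0 - 1) = 0 := by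
      rw [χ.map_zero, zero_mul]
    have herase : ∑ x ∈ Finset.univ.erase (0 : ZMod p), χ x * χ (x - 1)
        = ∑ x : ZMod p, χ x * χ (x - 1) :=
      Finset.sum_erase Finset.univ h0
    rw [← herase]
    have step : ∀ x ∈ Finset.univ.erase (0 : ZMod p), χ x * χ (x - 1) = χ (1 - x⁻¹) := by
      intro x hx
      have hx0 : x ≠ 0 := Finset.ne_of_mem_erase hx
      have hxx : x * (x - 1) = x ^ 2 * (1 - x⁻¹) := by
        field_simp
      rw [← map_mul, hxx, map_mul, quadraticChar_sq_one' hx0, one_mul]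
    rw [Finset.sum_congr rfl step]
    have hre : ∑ x ∈ Finset.univ.erase (0 : ZMod p), χ (1 - x⁻¹)
        = ∑ y ∈ Finset.univ.erase (1 : ZMod p), χ y := by
      apply Finset.sum_nbij' (fun x => 1 - x⁻¹) (fun y => (1 - y)⁻¹)
      · intro x hx
        have hx0 : x ≠ 0 := Finset.ne_of_mem_erase hx
        simp only [Finset.mem_erase, Finset.mem_univ, and_true]
        intro h
        apply hx0
        have : x⁻¹ = 0 := by linear_combination -h
        simpa using congrArg (· ⁻¹) this
      · intro y hy
        have hy1 : y ≠ 1 := Finset.ne_of_mem_erase hy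
        simp only [Finset.mem_erase, Finset.mem_univ, and_true]
        exact inv_ne_zero (sub_ne_zero.mpr (Ne.symm hy1))
      · intro x hx
        have hx0 : x ≠ 0 := Finset.ne_of_mem_erase hx
        have : (1 : ZMod p) - (1 - x⁻¹) = x⁻¹ := by ring
        rw [this, inv_inv]
      · intro y hy
        have hy1 : y ≠ 1 := Finset.ne_of_mem_erase hy
        have h1y : (1 : ZMod p) - y ≠ 0 := sub_ne_zero.mpr (Ne.symm hy1)
        rw [inv_inv]
        ring
      · intro x hx; rfl
    rw [hre, Finset.sum_erase_eq_sub (Finset.mem_univ _), quadraticChar_sum_zero hchar, hone]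
    ring
  -- pointwise identity
  have hpt : ∀ x : ZMod p, (1 - χ x) * (1 - χ (x - 1)) = if P x then 4 else 0 := by
    intro x
    by_cases h : P x
    · rw [if_pos h, h.1, h.2]; ring
    · rw [if_neg h]
      rcases eq_or_ne x 0 with rfl | hx0
      · rw [χ.map_zero]
        have : (0 : ZMod p) - 1 = -1 := by ring
        rw [this, hneg1]; ring
      rcases eq_or_ne x 1 with rfl | hx1
      · rw [hone]; ring
      · have d1 := quadraticChar_dichotomy (F := ZMod p) hx0
        have d2 := quadraticChar_dichotomy (F := ZMod p) (sub_ne_zero.mpr hx1)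
        rcases d1 with h1 | h1
        · rw [h1]; ring
        · rcases d2 with h2 | h2
          · rw [h2]; ring
          · exact absurd ⟨h1, h2⟩ h
  have hsum : ∑ x : ZMod p, (1 - χ x) * (1 - χ (x - 1)) = 4 * T.card := by
    rw [Finset.sum_congr rfl fun x _ => hpt x, Finset.sum_ite, Finset.sum_const,
      Finset.sum_const_zero, add_zero, nsmul_eq_mul]
    rw [hT]
    ring
  have hA : ∑ x : ZMod p, χ x = 0 := quadraticChar_sum_zero hchar
  have hB : ∑ x : ZMod p, χ (x - 1) = 0 := by
    exact (Fintype.sum_equiv (Equiv.subRight (1 : ZMod p)) (fun x => χ (x - 1))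
      (fun x => χ x) (fun x => rfl)).trans hA
  have hfinal : (4 : ℤ) * T.card = (p : ℤ) - 1 := by
    have e1 : ∑ x : ZMod p, ((1 : ℤ) - χ x - χ (x - 1) + χ x * χ (x - 1)) = 4 * T.card := by
      rw [← hsum]; exact Finset.sum_congr rfl fun x _ => by ring
    rw [← e1, Finset.sum_add_distrib, Finset.sum_sub_distrib, Finset.sum_sub_distrib,
      hA, hB, hS, Finset.sum_const, Finset.card_univ, ZMod.card]

    ring
  rw [hcard]
  omega
end

section
/- Let q be an odd prime power, S* the nonzero squares and N the non-squares of F_q, a, b ∈ F_q* with a ≠ b. Assuming |Σ_{x∈F_q} η(x(x-a)(x-b))| ≤ 2√q for the quadratic character η, the number of x ∈ F_q with x ∈ S*, x - a ∈ N, and x - b ∈ N is at least ⌊(q - 11 - 2√q)/8⌋. -/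
open Finset

section Aux

variable {F : Type*} [Field F] [Fintype F] [DecidableEq F]

lemma aux_shift (hF : ringChar F ≠ 2) (c : F) :
    ∑ x : F, quadraticChar F (x - c) = 0 := by
  rw [← Equiv.sum_comp (Equiv.addRight c) (fun x => quadraticChar F (x - c))]
  simpa using quadraticChar_sum_zero hF

lemma auxA (hF : ringChar F ≠ 2) {c : F} (hc : c ≠ 0) :
    ∑ x : F, quadraticChar F (x * (x - c)) = -1 := by
  classical
  have h0 : ∑ x : F, quadraticChar F (x * (x - c))
      = ∑ x ∈ Finset.univ \ {(0 : F)}, quadraticChar F (x * (x - c)) := by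
    rw [Finset.sum_sdiff_eq_sub (by simp)]
    simp
  rw [h0]
  have h1 : ∀ x ∈ Finset.univ \ {(0 : F)},
      quadraticChar F (x * (x - c)) = quadraticChar F (1 - c * x⁻¹) := by
    intro x hx
    have hx0 : x ≠ 0 := by simpa using hx
    have : x * (x - c) = x ^ 2 * (1 - c * x⁻¹) := by field_simp
    rw [this, map_mul, quadraticChar_sq_one' hx0, one_mul]
  rw [Finset.sum_congr rfl h1]
  have h2 : ∑ x ∈ Finset.univ \ {(0 : F)}, quadraticChar F (1 - c * x⁻¹)
      = ∑ y ∈ Finset.univ \ {(1 : F)}, quadraticChar F y := by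
    apply Finset.sum_nbij' (fun x => 1 - c * x⁻¹) (fun y => c / (1 - y))
    · intro x hx
      have hx0 : x ≠ 0 := by simpa using hx
      simp only [Finset.mem_sdiff, Finset.mem_univ, true_and, Finset.mem_singleton]
      intro h
      apply hc
      have : c * x⁻¹ = 0 := by linear_combination -h
      rcases mul_eq_zero.mp this with h' | h'
      · exact h'
      · exact absurd (inv_eq_zero.mp h') hx0
    · intro y hy
      have hy1 : y ≠ 1 := by simpa using hy
      simp only [Finset.mem_sdiff, Finset.mem_univ, true_and, Finset.mem_singleton]
      exact div_ne_zero hc (sub_ne_zero.mpr (Ne.symm hy1))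
    · intro x hx
      have hx0 : x ≠ 0 := by simpa using hx
      field_simp
      rw [sub_sub_cancel, div_self hc]
    · intro y hy
      have hy1 : y ≠ 1 := by simpa using hy
      have h1y : (1 : F) - y ≠ 0 := sub_ne_zero.mpr (Ne.symm hy1)
      field_simp
      ring
    · intro x _; rfl
  rw [h2]
  have h3 : ∑ y ∈ Finset.univ \ {(1 : F)}, quadraticChar F y
      = (∑ y : F, quadraticChar F y) - quadraticChar F 1 := by
    rw [Finset.sum_sdiff_eq_sub (by simp)]
    simp
  rw [h3, quadraticChar_sum_zero hF]
  simp

lemma auxB (hF : ringChar F ≠ 2) {a b : F} (hab : a ≠ b) :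
    ∑ x : F, quadraticChar F ((x - a) * (x - b)) = -1 := by
  have := auxA hF (c := b - a) (sub_ne_zero.mpr (Ne.symm hab))
  rw [← Equiv.sum_comp (Equiv.addRight a)
    (fun x => quadraticChar F ((x - a) * (x - b)))]
  simp only [Equiv.coe_addRight, add_sub_cancel_right]
  convert this using 2 with x
  ring_nf

lemma aux_pt (A B C : ℤ) (p q0 qa qb : Prop) [Decidable p] [Decidable q0]
    [Decidable qa] [Decidable qb]
    (hA : A = 0 ∨ A = 1 ∨ A = -1) (hB : B = 0 ∨ B = 1 ∨ B = -1)
    (hC : C = 0 ∨ C = 1 ∨ C = -1)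
    (hA0 : q0 ↔ A = 0) (hB0 : qa ↔ B = 0) (hC0 : qb ↔ C = 0)
    (hp : p ↔ (A = 1 ∧ B = -1 ∧ C = -1)) :
    (1 + A) * (1 - B) * (1 - C) ≤
      8 * (if p then 1 else 0) + (if q0 then 4 else 0) +
        (if qa then 4 else 0) + (if qb then 4 else 0) := by
  simp only [hA0, hB0, hC0, hp]
  rcases hA with h | h | h <;> rcases hB with h' | h' | h' <;>
    rcases hC with h'' | h'' | h'' <;> subst h <;> subst h' <;> subst h'' <;> norm_num

end Aux

/-- Let `q` be an odd prime power, `S*` the nonzero squares and `N` the non-squares of `F_q`,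
and `a ≠ b` in `F_q*`. Assuming the Weil bound `|Σ_x η(x(x-a)(x-b))| ≤ 2√q`, the number of
`x` with `x ∈ S*`, `x - a ∈ N`, `x - b ∈ N` is at least `⌊(q - 11 - 2√q)/8⌋`. -/
theorem stmt_7 (F : Type*) [Field F] [Fintype F] [DecidableEq F]
    (hodd : Odd (Fintype.card F)) (a b : F) (ha : a ≠ 0) (hb : b ≠ 0) (hab : a ≠ b)
    (hweil : |∑ x : F, ((quadraticChar F (x * (x - a) * (x - b)) : ℤ) : ℝ)| ≤
      2 * Real.sqrt (Fintype.card F)) :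
    ⌊((Fintype.card F : ℝ) - 11 - 2 * Real.sqrt (Fintype.card F)) / 8⌋ ≤
      (Nat.card {x : F // (IsSquare x ∧ x ≠ 0) ∧ (x - a ≠ 0 ∧ ¬ IsSquare (x - a)) ∧
        (x - b ≠ 0 ∧ ¬ IsSquare (x - b))} : ℤ) := by
  classical
  have hF2 : ringChar F ≠ 2 := by
    intro h
    have := FiniteField.even_card_of_char_two h
    rw [Nat.odd_iff] at hodd
    omega
  set q : ℕ := Fintype.card F with hq
  set χ : MulChar F ℤ := quadraticChar F with hχ
  set S : ℤ := ∑ x : F, χ (x * (x - a) * (x - b)) with hS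
  set cond : F → Prop := fun x => (IsSquare x ∧ x ≠ 0) ∧ (x - a ≠ 0 ∧ ¬ IsSquare (x - a)) ∧
      (x - b ≠ 0 ∧ ¬ IsSquare (x - b)) with hcond
  set cnt : ℕ := Nat.card {x : F // cond x} with hcnt
  -- the expanded sum
  have hsum0 : ∑ x : F, χ x = 0 := by
    have := aux_shift hF2 (0 : F); simp only [sub_zero] at this; exact this
  have hsuma : ∑ x : F, χ (x - a) = 0 := aux_shift hF2 a
  have hsumb : ∑ x : F, χ (x - b) = 0 := aux_shift hF2 b
  have hsumxa : ∑ x : F, χ (x * (x - a)) = -1 := auxA hF2 ha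
  have hsumxb : ∑ x : F, χ (x * (x - b)) = -1 := auxA hF2 hb
  have hsumab : ∑ x : F, χ ((x - a) * (x - b)) = -1 := auxB hF2 hab
  have key : ∑ x : F, (1 + χ x) * (1 - χ (x - a)) * (1 - χ (x - b))
      = (q : ℤ) + 1 + S := by
    have expand : ∀ x : F, (1 + χ x) * (1 - χ (x - a)) * (1 - χ (x - b))
        = 1 + χ x - χ (x - a) - χ (x - b) - χ (x * (x - a)) - χ (x * (x - b))
          + χ ((x - a) * (x - b)) + χ (x * (x - a) * (x - b)) := by
      intro x
      simp only [map_mul]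
      ring
    rw [Finset.sum_congr rfl (fun x _ => expand x)]
    simp only [Finset.sum_add_distrib, Finset.sum_sub_distrib, Finset.sum_const,
      Finset.card_univ, smul_eq_mul, mul_one]
    rw [hsum0, hsuma, hsumb, hsumxa, hsumxb, hsumab, ← hS, ← hq]
    ring
  -- pointwise bound and summation
  have hpt : ∀ x : F, (1 + χ x) * (1 - χ (x - a)) * (1 - χ (x - b)) ≤
      8 * (if cond x then 1 else 0) + (if x = 0 then 4 else 0) +
        (if x = a then 4 else 0) + (if x = b then 4 else 0) := by
    intro x
    apply aux_pt
    · rcases quadraticChar_isQuadratic F x with h | h | h <;> simp [hχ, h]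
    · rcases quadraticChar_isQuadratic F (x - a) with h | h | h <;> simp [hχ, h]
    · rcases quadraticChar_isQuadratic F (x - b) with h | h | h <;> simp [hχ, h]
    · rw [hχ]; exact quadraticChar_eq_zero_iff.symm
    · rw [hχ, quadraticChar_eq_zero_iff, sub_eq_zero]
    · rw [hχ, quadraticChar_eq_zero_iff, sub_eq_zero]
    · rw [hcond, hχ]
      constructor
      · rintro ⟨⟨hs, hx⟩, ⟨hxa, hsa⟩, ⟨hxb, hsb⟩⟩
        exact ⟨(quadraticChar_one_iff_isSquare hx).mpr hs,
          quadraticChar_neg_one_iff_not_isSquare.mpr hsa,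
          quadraticChar_neg_one_iff_not_isSquare.mpr hsb⟩
      · rintro ⟨h1, h2, h3⟩
        have hx : x ≠ 0 := by
          intro h; rw [h] at h1; simp at h1
        have hxa : x - a ≠ 0 := by
          intro h; rw [h] at h2; simp at h2
        have hxb : x - b ≠ 0 := by
          intro h; rw [h] at h3; simp at h3
        exact ⟨⟨(quadraticChar_one_iff_isSquare hx).mp h1, hx⟩,
          ⟨hxa, quadraticChar_neg_one_iff_not_isSquare.mp h2⟩,
          ⟨hxb, quadraticChar_neg_one_iff_not_isSquare.mp h3⟩⟩
  have hsumle : (q : ℤ) + 1 + S ≤ 8 * (cnt : ℤ) + 12 := by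
    have := Finset.sum_le_sum (fun x (_ : x ∈ Finset.univ) => hpt x)
    rw [key] at this
    have hcount : ∑ x : F, (if cond x then (1 : ℤ) else 0) = (cnt : ℤ) := by
      rw [Finset.sum_boole, hcnt, Nat.card_eq_fintype_card, Fintype.card_subtype]
    have h0 : ∑ x : F, (if x = 0 then (4 : ℤ) else 0) = 4 := by
      rw [Finset.sum_ite_eq' Finset.univ (0 : F) (fun _ => (4 : ℤ))]; simp
    have ha' : ∑ x : F, (if x = a then (4 : ℤ) else 0) = 4 := by
      rw [Finset.sum_ite_eq' Finset.univ a (fun _ => (4 : ℤ))]; simp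
    have hb' : ∑ x : F, (if x = b then (4 : ℤ) else 0) = 4 := by
      rw [Finset.sum_ite_eq' Finset.univ b (fun _ => (4 : ℤ))]; simp
    calc (q : ℤ) + 1 + S ≤ _ := this
      _ = 8 * (cnt : ℤ) + 12 := by
        simp only [Finset.sum_add_distrib]
        rw [← Finset.mul_sum, hcount, h0, ha', hb']
        ring
  -- pass to the reals
  have hSR : |((S : ℤ) : ℝ)| ≤ 2 * Real.sqrt q := by
    rw [hS]
    push_cast
    exact hweil
  have hcntR : ((q : ℝ) - 11 - 2 * Real.sqrt q) / 8 ≤ (cnt : ℝ) := by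
    have h1 : -(2 * Real.sqrt q) ≤ ((S : ℤ) : ℝ) := neg_le_of_abs_le hSR
    have h2 : (q : ℝ) + 1 + (S : ℝ) ≤ 8 * (cnt : ℝ) + 12 := by
      exact_mod_cast hsumle
    linarith
  calc ⌊((q : ℝ) - 11 - 2 * Real.sqrt q) / 8⌋ ≤ ⌊((cnt : ℕ) : ℝ)⌋ :=
        Int.floor_le_floor hcntR
    _ = (cnt : ℤ) := by rw [Int.floor_natCast]
end

section
/- Let X be a graph admitting an (m,p)-semiregular automorphism ρ, where p is a prime, i.e., ρ has exactly m orbits on vertices, each of size p. Let C be a cycle of length m in the quotient graph X_P on the orbit set P of ρ. Then the lift of C (the subgraph of X induced on edges projecting to edges of C) either contains a cycle of length mp, or consists of p disjoint m-cycles; in the latter case every vertex in an orbit S on C has exactly one neighbor in each adjacent orbit S' on C. -/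
open MulAction

variable {V : Type*} [Fintype V] [DecidableEq V]

/-- The quotient graph of `X` by the orbits of the permutation `σ`: vertices are the
`⟨σ⟩`-orbits, with two distinct orbits adjacent iff some vertex of one is adjacent in `X`
to some vertex of the other. -/
def quotGraph (σ : Equiv.Perm V) (X : SimpleGraph V) :
    SimpleGraph (Quotient (orbitRel (Subgroup.zpowers σ) V)) where
  Adj A B := A ≠ B ∧ ∃ a b : V, Quotient.mk _ a = A ∧ Quotient.mk _ b = B ∧ X.Adj a b
  symm := by
    constructor
    rintro A B ⟨hne, a, b, ha, hb, hab⟩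
    exact ⟨hne.symm, b, a, hb, ha, hab.symm⟩
  loopless := ⟨fun A h => h.1 rfl⟩

/-- The lift of a closed walk `c` in the quotient graph: the spanning subgraph of `X`
whose edges are those edges of `X` projecting to edges of `c`. -/
def liftGraph (σ : Equiv.Perm V) (X : SimpleGraph V)
    {u : Quotient (orbitRel (Subgroup.zpowers σ) V)} (c : (quotGraph σ X).Walk u u) :
    SimpleGraph V where
  Adj a b := X.Adj a b ∧ s(Quotient.mk _ a, Quotient.mk _ b) ∈ c.edges
  symm := by
    constructor
    rintro a b ⟨h1, h2⟩
    exact ⟨h1.symm, by rwa [Sym2.eq_swap]⟩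
  loopless := ⟨fun a h => X.ne_of_adj h.1 rfl⟩

set_option linter.unusedSectionVars false

namespace Stmt15

open SimpleGraph

section WalkHelpers
variable {W : Type*} {G : SimpleGraph W}

lemma supp_eq : ∀ {x y : W} (w : G.Walk x y),
    w.support = (List.range (w.length + 1)).map w.getVert
  | _, _, .nil => by simp [List.range_succ]
  | x, y, .cons h q => by
    rw [Walk.support_cons, supp_eq q, Walk.length_cons]
    conv_rhs => rw [List.range_succ_eq_map]
    simp [Walk.getVert_cons_succ, Function.comp_def, List.map_map]

lemma edg_eq : ∀ {x y : W} (w : G.Walk x y),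
    w.edges = (List.range w.length).map (fun i => s(w.getVert i, w.getVert (i+1)))
  | _, _, .nil => by simp
  | x, y, .cons h q => by
    rw [Walk.edges_cons, edg_eq q, Walk.length_cons]
    conv_rhs => rw [List.range_succ_eq_map]
    simp [Walk.getVert_cons_succ, Function.comp_def, List.map_map]

lemma exists_walk (f : ℕ → W) : ∀ (n : ℕ), (∀ i < n, G.Adj (f i) (f (i+1))) →
    ∃ w : G.Walk (f 0) (f n), w.length = n ∧
      w.support = (List.range (n+1)).map f ∧
      w.edges = (List.range n).map (fun i => s(f i, f (i+1)))
  | 0, _ => ⟨Walk.nil, by simp [List.range_succ]⟩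
  | (n+1), hadj => by
    obtain ⟨w, hl, hs, he⟩ := exists_walk f n (fun i hi => hadj i (by omega))
    refine ⟨w.concat (hadj n (by omega)), ?_, ?_, ?_⟩
    · simp [Walk.length_concat, hl]
    · rw [Walk.support_concat, hs]
      simp [List.range_succ]
    · rw [Walk.edges_concat, he, List.range_succ, List.map_append]; simp

lemma exists_cycle (f : ℕ → W) (n : ℕ) (hn : 3 ≤ n)
    (hadj : ∀ i < n, G.Adj (f i) (f (i+1))) (hper : f n = f 0)
    (hinj : ∀ i < n, ∀ j < n, f i = f j → i = j) :
    ∃ w : G.Walk (f 0) (f 0), w.IsCycle ∧ w.length = n := by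
  obtain ⟨P, hPl, hPs, hPe⟩ := exists_walk (fun i => f (i+1)) (n-1)
    (fun i hi => hadj (i+1) (by omega))
  have hcast : f (n-1+1) = f 0 := by rw [show n-1+1 = n by omega, hper]
  set Q : G.Walk (f 1) (f 0) := P.copy rfl hcast with hQ
  have hQl : Q.length = n - 1 := by rw [hQ, Walk.length_copy, hPl]
  have hQs : Q.support = (List.range n).map (fun i => f (i+1)) := by
    rw [hQ, Walk.support_copy, hPs, show n-1+1 = n by omega]
  have hQe : Q.edges = (List.range (n-1)).map (fun i => s(f (i+1), f (i+2))) := by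
    rw [hQ, Walk.edges_copy, hPe]
  have hinj' : ∀ i < n, ∀ j < n, f (i+1) = f (j+1) → i = j := by
    intro i hi j hj hij
    have key : ∀ k, k < n → f (k+1) = f ((k+1) % n) := by
      intro k hk
      rcases eq_or_lt_of_le (Nat.succ_le_of_lt hk) with h | h
      · rw [show k + 1 = n by omega, Nat.mod_self, hper]
      · rw [Nat.mod_eq_of_lt h]
    rw [key i hi, key j hj] at hij
    have h2 := hinj _ (Nat.mod_lt _ (by omega)) _ (Nat.mod_lt _ (by omega)) hij
    rcases eq_or_lt_of_le (Nat.succ_le_of_lt hi) with h1 | h1 <;>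
      rcases eq_or_lt_of_le (Nat.succ_le_of_lt hj) with h1' | h1'
    · omega
    · rw [show i + 1 = n by omega, Nat.mod_self, Nat.mod_eq_of_lt h1'] at h2; omega
    · rw [show j + 1 = n by omega, Nat.mod_self, Nat.mod_eq_of_lt h1] at h2; omega
    · rw [Nat.mod_eq_of_lt h1, Nat.mod_eq_of_lt h1'] at h2; omega
  have hQp : Q.IsPath := by
    apply Walk.IsPath.mk'
    rw [hQs]
    refine List.Nodup.map_on ?_ (List.nodup_range)
    intro i hi j hj hij
    exact hinj' i (List.mem_range.mp hi) j (List.mem_range.mp hj) hij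
  have hnotmem : s(f 0, f 1) ∉ Q.edges := by
    rw [hQe]
    intro hmem
    obtain ⟨i, hi, heq⟩ := List.mem_map.mp hmem
    rw [List.mem_range] at hi
    rw [Sym2.eq_iff] at heq
    rcases heq with ⟨h1, h2⟩ | ⟨h1, h2⟩
    · have := hinj (i+1) (by omega) 0 (by omega) h1
      omega
    · have e1 := hinj' i (by omega) 0 (by omega) h1
      have h4 := hinj (i+2) (by omega) 0 (by omega) h2
      omega
  have hadj01 : G.Adj (f 0) (f 1) := hadj 0 (by omega)
  refine ⟨Walk.cons hadj01 Q, ?_, ?_⟩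
  · exact (Walk.cons_isCycle_iff Q hadj01).mpr ⟨hQp, hnotmem⟩
  · rw [Walk.length_cons, hQl]; omega

end WalkHelpers

section PermHelpers
variable (σ : Equiv.Perm V) {p : ℕ}

lemma pow_apply_orbit (k : ℕ) (x : V) :
    Quotient.mk (orbitRel (Subgroup.zpowers σ) V) ((σ ^ k) x)
      = Quotient.mk (orbitRel (Subgroup.zpowers σ) V) x := by
  apply Quotient.sound
  change (σ ^ k) x ∈ orbit (Subgroup.zpowers σ) x
  exact ⟨⟨σ ^ k, pow_mem (Subgroup.mem_zpowers σ) k⟩, rfl⟩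

lemma pow_mod (hσ : σ ^ p = 1) (k : ℕ) : σ ^ k = σ ^ (k % p) := by
  conv_lhs => rw [← Nat.div_add_mod k p]
  rw [pow_add, pow_mul, hσ, one_pow, one_mul]

lemma eq_pow_of_mk_eq (hσ : σ ^ p = 1) (hp : 0 < p) {a b : V}
    (h : Quotient.mk (orbitRel (Subgroup.zpowers σ) V) a
       = Quotient.mk (orbitRel (Subgroup.zpowers σ) V) b) :
    ∃ k : ℕ, (σ ^ k) b = a := by
  have h' := Quotient.exact h
  obtain ⟨⟨g, hg⟩, hgb⟩ := h'
  obtain ⟨z, hz⟩ := Subgroup.mem_zpowers_iff.mp hg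
  have hzp : σ ^ ((p : ℤ)) = 1 := by rw [zpow_natCast, hσ]
  refine ⟨(z % p).toNat, ?_⟩
  have hnn : (0:ℤ) ≤ z % p := Int.emod_nonneg z (by exact_mod_cast hp.ne')
  have h2 : σ ^ z = σ ^ ((z % p).toNat : ℕ) := by
    conv_lhs => rw [← Int.mul_ediv_add_emod z p]
    rw [zpow_add, zpow_mul, hzp, one_zpow, one_mul, ← zpow_natCast]
    congr 1
    omega
  rw [← h2]
  have h3 : g • b = a := hgb
  rw [← hz] at h3
  exact h3

lemma adj_pow_of_adj {X : SimpleGraph V} (hA : ∀ a b, X.Adj a b → X.Adj (σ a) (σ b))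
    (k : ℕ) {a b : V} (h : X.Adj a b) : X.Adj ((σ ^ k) a) ((σ ^ k) b) := by
  induction k with
  | zero => simpa using h
  | succ n ih =>
    rw [pow_succ']
    simpa [Equiv.Perm.mul_apply] using hA _ _ ih

lemma pow_cast_eq_iff (hσ : σ ^ p = 1) (hp : 0 < p)
    (hmin : ∀ (v : V) (k : ℕ), (σ ^ k) v = v → p ∣ k) (a b : ℕ) (x : V) :
    (σ ^ a) x = (σ ^ b) x ↔ (a : ZMod p) = (b : ZMod p) := by
  constructor
  · intro h
    rcases le_total a b with hab | hab
    · have h1 : σ ^ b = σ ^ a * σ ^ (b - a) := by rw [← pow_add]; congr 1; omega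
      rw [h1, Equiv.Perm.mul_apply] at h
      have := hmin x (b - a) ((σ ^ a).injective h.symm)
      rw [ZMod.natCast_eq_natCast_iff]
      exact (Nat.modEq_iff_dvd' hab).mpr this
    · have h1 : σ ^ a = σ ^ b * σ ^ (a - b) := by rw [← pow_add]; congr 1; omega
      rw [h1, Equiv.Perm.mul_apply] at h
      have := hmin x (a - b) ((σ ^ b).injective h)
      rw [ZMod.natCast_eq_natCast_iff]
      exact ((Nat.modEq_iff_dvd' hab).mpr this).symm
  · intro h
    rw [ZMod.natCast_eq_natCast_iff, Nat.ModEq] at h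
    rw [pow_mod σ hσ a, pow_mod σ hσ b, h]

lemma inv_pow_apply (hσ : σ ^ p = 1) (hp : 0 < p) (k : ℕ) (x : V) :
    (σ ^ (k * (p - 1))) ((σ ^ k) x) = x := by
  rw [← Equiv.Perm.mul_apply, ← pow_add]
  have h1 : k * (p - 1) + k = k * p := by
    cases p with | zero => omega | succ q => simp [Nat.mul_sub, Nat.mul_succ]
  rw [h1, pow_mul', hσ, one_pow, Equiv.Perm.one_apply]

end PermHelpers

section SumHelpers

lemma sum_shift (s : ℕ → ℕ) (m : ℕ) (hsper : ∀ i, s (i + m) = s i) (j : ℕ) :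
    ∑ i ∈ Finset.range m, s (j + i) = ∑ i ∈ Finset.range m, s i := by
  induction j with
  | zero => simp
  | succ j ih =>
    have h1 : s j + ∑ i ∈ Finset.range m, s (j + 1 + i)
        = ∑ i ∈ Finset.range m, s (j + i) + s (j + m) := by
      rw [← Finset.sum_range_succ (fun i => s (j + i)) m]
      rw [Finset.sum_range_succ' (fun i => s (j + i)) m]
      simp [Nat.add_comm, Nat.add_assoc, Nat.add_left_comm]
    rw [hsper j] at h1
    omega

end SumHelpers

end Stmt15


section LiftLemmas

variable {V : Type*} [Fintype V] [DecidableEq V]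

open Stmt15 SimpleGraph

lemma lift_data_facts (σ : Equiv.Perm V) (X : SimpleGraph V) {p : ℕ}
    (hσ : σ ^ p = 1) (hp0 : 0 < p)
    (hmin : ∀ (v : V) (k : ℕ), (σ ^ k) v = v → p ∣ k)
    (hA : ∀ a b, X.Adj a b → X.Adj (σ a) (σ b))
    {u : Quotient (orbitRel (Subgroup.zpowers σ) V)} {c : (quotGraph σ X).Walk u u}
    {b : ℕ → V} {s : ℕ → ℕ}
    (hedge : ∀ i, s(Quotient.mk (orbitRel (Subgroup.zpowers σ) V) (b i),
        Quotient.mk (orbitRel (Subgroup.zpowers σ) V) (b (i+1))) ∈ c.edges)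
    (hadj : ∀ i, X.Adj (b i) ((σ ^ s i) (b (i + 1))))
    (t : ℕ → ℕ) (hstep : ∀ j, t (j + 1) = t j + s j) :
    ∀ j, (liftGraph σ X c).Adj ((σ ^ t j) (b j)) ((σ ^ t (j+1)) (b (j+1))) := by
  intro j
  show X.Adj _ _ ∧ _
  constructor
  · rw [hstep j, pow_add, Equiv.Perm.mul_apply]
    exact adj_pow_of_adj σ hA (t j) (hadj j)
  · rw [pow_apply_orbit, pow_apply_orbit]
    exact hedge j

lemma sum_range_add' (s : ℕ → ℕ) (a : ℕ) : ∀ b : ℕ,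
    ∑ i ∈ Finset.range (a + b), s i
      = ∑ i ∈ Finset.range a, s i + ∑ i ∈ Finset.range b, s (a + i)
  | 0 => by simp
  | (n+1) => by
    rw [show a + (n+1) = (a+n)+1 from rfl, Finset.sum_range_succ, sum_range_add' s a n,
      Finset.sum_range_succ]
    omega

lemma lift_long_cycle (σ : Equiv.Perm V) (X : SimpleGraph V) (p m : ℕ)
    (hp : p.Prime) (hσ : σ ^ p = 1)
    (hmin : ∀ (v : V) (k : ℕ), (σ ^ k) v = v → p ∣ k)
    (hA : ∀ a b, X.Adj a b → X.Adj (σ a) (σ b))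
    {u : Quotient (orbitRel (Subgroup.zpowers σ) V)} (c : (quotGraph σ X).Walk u u)
    (hm3 : 3 ≤ m)
    (b : ℕ → V) (s : ℕ → ℕ)
    (hedge : ∀ i, s(Quotient.mk (orbitRel (Subgroup.zpowers σ) V) (b i),
        Quotient.mk (orbitRel (Subgroup.zpowers σ) V) (b (i+1))) ∈ c.edges)
    (hbinj : ∀ i j, Quotient.mk (orbitRel (Subgroup.zpowers σ) V) (b i)
        = Quotient.mk (orbitRel (Subgroup.zpowers σ) V) (b j) → i % m = j % m)
    (hbper : ∀ i, b (i + m) = b i) (hsper : ∀ i, s (i + m) = s i)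
    (hadj : ∀ i, X.Adj (b i) ((σ ^ s i) (b (i + 1))))
    (hS : ((∑ i ∈ Finset.range m, s i : ℕ) : ZMod p) ≠ 0) :
    ∃ (v : V) (w : (liftGraph σ X c).Walk v v), w.IsCycle ∧ w.length = m * p := by
  haveI : Fact p.Prime := ⟨hp⟩
  have hp0 : 0 < p := hp.pos
  have hp2 : 2 ≤ p := hp.two_le
  have hm0 : 0 < m := by omega
  set T : ℕ → ℕ := fun j => ∑ i ∈ Finset.range j, s i with hT
  set f : ℕ → V := fun j => (σ ^ T j) (b j) with hf
  have hbper' : ∀ j k, b (j + k * m) = b j := by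
    intro j k
    induction k with
    | zero => simp
    | succ n ih => rw [show j + (n+1)*m = (j + n*m) + m by ring, hbper, ih]
  have hTadd : ∀ j, T (j + m) = T j + T m := by
    intro j
    simp only [hT]
    rw [sum_range_add' s j m, sum_shift s m hsper j]
  have hTper : ∀ j k, T (j + k * m) = T j + k * T m := by
    intro j k
    induction k with
    | zero => simp
    | succ n ih =>
      rw [show j + (n+1)*m = (j + n*m) + m by ring, hTadd, ih]
      ring
  have hfadj : ∀ j, (liftGraph σ X c).Adj (f j) (f (j+1)) :=
    lift_data_facts σ X hσ hp0 hmin hA hedge hadj T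
      (fun j => Finset.sum_range_succ s j)
  have hfd : ∀ j, f j = (σ ^ T j) (b j) := fun _ => rfl
  have hT0 : T 0 = 0 := by simp [hT]
  have hfper : f (m * p) = f 0 := by
    rw [hfd, hfd, show m * p = 0 + p * m by ring, hbper' 0 p, hTper 0 p, hT0]
    rw [Nat.zero_add, pow_mul, hσ, one_pow]
    simp
  have hfinj : ∀ i < m * p, ∀ j < m * p, f i = f j → i = j := by
    have key : ∀ i j, i ≤ j → j < i + m * p → f i = f j → i = j := by
      intro i j hij hjlt hfij
      have hmk : Quotient.mk (orbitRel (Subgroup.zpowers σ) V) (b i)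
          = Quotient.mk (orbitRel (Subgroup.zpowers σ) V) (b j) := by
        have := congrArg (Quotient.mk (orbitRel (Subgroup.zpowers σ) V)) hfij
        rwa [hfd, hfd, pow_apply_orbit, pow_apply_orbit] at this
      have hmod := hbinj i j hmk
      have hdvd : m ∣ j - i := (Nat.modEq_iff_dvd' hij).mp hmod
      obtain ⟨k, hk⟩ := hdvd
      have hcomm1 : m * k = k * m := by ring
      have hcomm2 : m * p = p * m := by ring
      have hjk : j = i + k * m := by omega
      have hklt : k < p := by
        by_contra hge
        push_neg at hge
        have h3 : p * m ≤ k * m := Nat.mul_le_mul_right m hge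
        omega
      rw [hjk, hfd, hfd, hbper' i k, hTper i k] at hfij
      rw [pow_cast_eq_iff σ hσ hp0 hmin] at hfij
      push_cast at hfij
      have hzero : (k : ZMod p) * ((T m : ℕ) : ZMod p) = 0 := by
        have h4 := sub_eq_zero.mpr hfij.symm
        rw [add_sub_cancel_left] at h4
        exact h4
      rcases mul_eq_zero.mp hzero with hk0 | hT0'
      · have h5 : p ∣ k := (ZMod.natCast_eq_zero_iff k p).mp hk0
        have h6 : k = 0 := by
          by_contra hne
          have hkpos : 0 < k := Nat.pos_of_ne_zero hne
          have hpk : p ≤ k := Nat.le_of_dvd hkpos h5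
          have h7 : p * m ≤ k * m := Nat.mul_le_mul_right m hpk
          omega
        rw [h6, Nat.zero_mul] at hjk
        omega
      · exact absurd hT0' hS
    intro i hi j hj hfij
    rcases le_total i j with h | h
    · exact key i j h (by omega) hfij
    · exact (key j i h (by omega) hfij.symm).symm
  obtain ⟨w, hw⟩ := exists_cycle f (m * p) (by nlinarith) (fun i _ => hfadj i) hfper hfinj
  exact ⟨f 0, w, hw⟩

end LiftLemmas

section LiftShort

variable {V : Type*} [Fintype V] [DecidableEq V]

open Stmt15 SimpleGraph MulAction

lemma lift_short_cycle (σ : Equiv.Perm V) (X : SimpleGraph V) (p m : ℕ)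
    (hp : p.Prime) (hσ : σ ^ p = 1)
    (hmin : ∀ (v : V) (k : ℕ), (σ ^ k) v = v → p ∣ k)
    (hA : ∀ a b, X.Adj a b → X.Adj (σ a) (σ b))
    {u : Quotient (orbitRel (Subgroup.zpowers σ) V)} (c : (quotGraph σ X).Walk u u)
    (hm3 : 3 ≤ m)
    (b : ℕ → V) (s : ℕ → ℕ)
    (hedge : ∀ i, s(Quotient.mk (orbitRel (Subgroup.zpowers σ) V) (b i),
        Quotient.mk (orbitRel (Subgroup.zpowers σ) V) (b (i+1))) ∈ c.edges)
    (hbinj : ∀ i j, Quotient.mk (orbitRel (Subgroup.zpowers σ) V) (b i)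
        = Quotient.mk (orbitRel (Subgroup.zpowers σ) V) (b j) → i % m = j % m)
    (hbper : ∀ i, b (i + m) = b i) (hsper : ∀ i, s (i + m) = s i)
    (hadj : ∀ i, X.Adj (b i) ((σ ^ s i) (b (i + 1))))
    (hS : ((∑ i ∈ Finset.range m, s i : ℕ) : ZMod p) = 0)
    (v : V) (i0 t : ℕ) (hv : v = (σ ^ t) (b i0)) :
    ∃ w : (liftGraph σ X c).Walk v v, w.IsCycle ∧ w.length = m := by
  have hp0 : 0 < p := hp.pos
  have hm0 : 0 < m := by omega
  -- shifted data
  set b' : ℕ → V := fun i => b (i0 + i) with hb'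
  set s' : ℕ → ℕ := fun i => s (i0 + i) with hs'
  set U : ℕ → ℕ := fun j => ∑ i ∈ Finset.range j, s' i with hU
  set g : ℕ → V := fun j => (σ ^ (t + U j)) (b' j) with hg
  have hgd : ∀ j, g j = (σ ^ (t + U j)) (b' j) := fun _ => rfl
  have hedge' : ∀ i, s(Quotient.mk (orbitRel (Subgroup.zpowers σ) V) (b' i),
      Quotient.mk (orbitRel (Subgroup.zpowers σ) V) (b' (i+1))) ∈ c.edges := by
    intro i
    exact hedge (i0 + i)
  have hadj' : ∀ i, X.Adj (b' i) ((σ ^ s' i) (b' (i + 1))) := by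
    intro i
    exact hadj (i0 + i)
  have hgadj : ∀ j, (liftGraph σ X c).Adj (g j) (g (j+1)) :=
    lift_data_facts σ X hσ hp0 hmin hA hedge' hadj' (fun j => t + U j)
      (fun j => by rw [hU]; simp only []; rw [Finset.sum_range_succ]; omega)
  have hgper : g m = g 0 := by
    rw [hgd, hgd]
    have hU0 : U 0 = 0 := by simp [hU]
    have hb'm : b' m = b' 0 := by
      show b (i0 + m) = b i0
      exact hbper i0
    rw [hU0, hb'm]
    rw [pow_cast_eq_iff σ hσ hp0 hmin]
    have hUm : (U m : ZMod p) = 0 := by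
      rw [hU]
      simp only [hs']
      rw [sum_shift s m hsper i0]
      exact hS
    push_cast [hUm]
    ring
  have hginj : ∀ i < m, ∀ j < m, g i = g j → i = j := by
    intro i hi j hj hgij
    have hmk : Quotient.mk (orbitRel (Subgroup.zpowers σ) V) (b (i0 + i))
        = Quotient.mk (orbitRel (Subgroup.zpowers σ) V) (b (i0 + j)) := by
      have := congrArg (Quotient.mk (orbitRel (Subgroup.zpowers σ) V)) hgij
      rwa [hgd, hgd, pow_apply_orbit, pow_apply_orbit] at this
    have hmod := hbinj _ _ hmk
    have h1 : i % m = j % m := Nat.ModEq.add_left_cancel' i0 hmod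
    rwa [Nat.mod_eq_of_lt hi, Nat.mod_eq_of_lt hj] at h1
  obtain ⟨w, hw⟩ := exists_cycle g m hm3 (fun i _ => hgadj i) hgper hginj
  have hg0 : g 0 = v := by
    rw [hgd, hv]
    show (σ ^ (t + U 0)) (b i0) = (σ ^ t) (b i0)
    have hU0 : U 0 = 0 := by simp [hU]
    rw [hU0, Nat.add_zero]
  refine ⟨(w.copy hg0 hg0), ?_, ?_⟩
  · rw [SimpleGraph.Walk.isCycle_copy]
    exact hw.1
  · rw [SimpleGraph.Walk.length_copy]
    exact hw.2

end LiftShort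

open Stmt15

/-- Let `X` be a graph with an `(m,p)`-semiregular automorphism `ρ` (`p` prime: `ρ` has
exactly `m` orbits, each of size `p`), and let `C` be a cycle of length `m` in the quotient
graph. Then the lift of `C` either contains a cycle of length `mp`, or it consists of `p`
disjoint `m`-cycles; in the latter case every vertex has exactly one neighbor in each orbit
adjacent to its own along `C`. -/
theorem stmt_15 (X : SimpleGraph V) (ρ : X ≃g X) (m p : ℕ) (hp : p.Prime)
    (horb : ∀ v : V,
      Nat.card (orbit (Subgroup.zpowers (ρ.toEquiv : Equiv.Perm V)) v) = p)
    (hm : Nat.card (Quotient (orbitRel (Subgroup.zpowers (ρ.toEquiv : Equiv.Perm V)) V)) = m)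
    {u : Quotient (orbitRel (Subgroup.zpowers (ρ.toEquiv : Equiv.Perm V)) V)}
    (c : (quotGraph (ρ.toEquiv : Equiv.Perm V) X).Walk u u)
    (hc : c.IsCycle) (hlen : c.length = m) :
    (∃ (v : V) (w : (liftGraph (ρ.toEquiv : Equiv.Perm V) X c).Walk v v),
        w.IsCycle ∧ w.length = m * p) ∨
    ((∀ v : V, ∃ w : (liftGraph (ρ.toEquiv : Equiv.Perm V) X c).Walk v v,
        w.IsCycle ∧ w.length = m) ∧
      ∀ (a : V) (B : Quotient (orbitRel (Subgroup.zpowers (ρ.toEquiv : Equiv.Perm V)) V)),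
        s(Quotient.mk _ a, B) ∈ c.edges →
        Nat.card {b : V // Quotient.mk _ b = B ∧ X.Adj a b} = 1) := by
  classical
  set σ : Equiv.Perm V := (ρ.toEquiv : Equiv.Perm V) with hσdef
  set π := Quotient.mk (MulAction.orbitRel (Subgroup.zpowers σ) V) with hπdef
  haveI : Fact p.Prime := ⟨hp⟩
  have hp0 : 0 < p := hp.pos
  have hp2 : 2 ≤ p := hp.two_le
  -- basic facts about σ
  have hminP : ∀ v : V, Function.minimalPeriod (σ • ·) v = p := by
    intro v
    have h1 := horb v
    rwa [Nat.card_congr (MulAction.orbitZPowersEquiv σ v), Nat.card_zmod] at h1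
  have hσ : σ ^ p = 1 := by
    ext v
    have h1 := Function.iterate_minimalPeriod (f := (σ • ·)) (x := v)
    rw [hminP v, smul_iterate] at h1
    simpa [Equiv.Perm.smul_def] using h1
  have hmin : ∀ (v : V) (k : ℕ), (σ ^ k) v = v → p ∣ k := by
    intro v k hk
    have h1 : Function.IsPeriodicPt (σ • ·) k v := by
      show (σ • ·)^[k] v = v
      rw [smul_iterate]
      simpa [Equiv.Perm.smul_def] using hk
    have := h1.minimalPeriod_dvd
    rwa [hminP v] at this
  have hA : ∀ a b, X.Adj a b → X.Adj (σ a) (σ b) := by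
    intro a b h
    exact ρ.map_adj_iff.mpr h
  have hm3 : 3 ≤ m := hlen ▸ hc.three_le_length
  have hm0 : 0 < m := by omega
  -- the orbit sequence along c
  set A : ℕ → Quotient (MulAction.orbitRel (Subgroup.zpowers σ) V) := fun i => c.getVert i
    with hAdef
  have hAm : A m = A 0 := by
    rw [hAdef]
    simp only []
    rw [show m = c.length from hlen.symm, SimpleGraph.Walk.getVert_length,
      SimpleGraph.Walk.getVert_zero]
  have hadjA : ∀ i < m, (quotGraph σ X).Adj (A i) (A (i+1)) := by
    intro i hi
    exact c.adj_getVert_succ (by omega)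
  have AINJ1 : ∀ i < m, ∀ j < m, A (i+1) = A (j+1) → i = j := by
    have hnd := hc.2
    rw [Stmt15.supp_eq c, hlen] at hnd
    rw [List.range_succ_eq_map] at hnd
    simp only [List.map_cons, List.tail_cons, List.map_map] at hnd
    intro i hi j hj hij
    refine List.inj_on_of_nodup_map hnd ?_ ?_ ?_
    · exact List.mem_range.mpr hi
    · exact List.mem_range.mpr hj
    · simpa [Function.comp_def, Nat.succ_eq_add_one] using hij
  have AINJ : ∀ i < m, ∀ j < m, A i = A j → i = j := by
    intro i hi j hj hij
    rcases Nat.eq_zero_or_pos i with h0 | h0 <;> rcases Nat.eq_zero_or_pos j with h0' | h0'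
    · omega
    · exfalso
      rw [h0, ← hAm] at hij
      have := AINJ1 (m-1) (by omega) (j-1) (by omega)
        (by rw [show m - 1 + 1 = m by omega, show j - 1 + 1 = j by omega]; exact hij)
      omega
    · exfalso
      rw [h0', ← hAm] at hij
      have := AINJ1 (i-1) (by omega) (m-1) (by omega)
        (by rw [show m - 1 + 1 = m by omega, show i - 1 + 1 = i by omega]; exact hij)
      omega
    · have := AINJ1 (i-1) (by omega) (j-1) (by omega)
        (by rw [show i - 1 + 1 = i by omega, show j - 1 + 1 = j by omega]; exact hij)
      omega
  have SURJ : ∀ B, ∃ j, j < m ∧ A j = B := by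
    intro B
    have hQfin : Finite (Quotient (MulAction.orbitRel (Subgroup.zpowers σ) V)) :=
      Quotient.finite _
    have hbij : Function.Bijective (fun i : Fin m => A i) := by
      rw [Nat.bijective_iff_injective_and_card]
      constructor
      · intro i j hij
        exact Fin.ext (AINJ i i.2 j j.2 hij)
      · rw [hm, Nat.card_eq_fintype_card, Fintype.card_fin]
    obtain ⟨i, hi⟩ := hbij.2 B
    exact ⟨i, i.2, hi⟩
  have EDG : ∀ j < m, s(A j, A (j+1)) ∈ c.edges := by
    intro j hj
    rw [Stmt15.edg_eq c]
    exact List.mem_map.mpr ⟨j, List.mem_range.mpr (by omega), rfl⟩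
  have EDGmem : ∀ e ∈ c.edges, ∃ i, i < m ∧ e = s(A i, A (i+1)) := by
    intro e he
    rw [Stmt15.edg_eq c, List.mem_map] at he
    obtain ⟨i, hi, hie⟩ := he
    exact ⟨i, by rw [List.mem_range, hlen] at hi; exact hi, hie.symm⟩
  -- vertex representatives and shifts
  set b : ℕ → V := fun i => (A (i % m)).out with hbdef
  have hπb : ∀ i, π (b i) = A (i % m) := fun i => Quotient.out_eq _
  have hstep : ∀ i, A ((i+1) % m) = A ((i % m) + 1) := by
    intro i
    have h1 : (i+1) % m = (i % m + 1) % m := by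
      conv_lhs => rw [Nat.add_mod]
      rw [Nat.mod_eq_of_lt (show 1 < m by omega)]
    rcases eq_or_lt_of_le (Nat.succ_le_of_lt (Nat.mod_lt i hm0)) with h2 | h2
    · have h2' : i % m + 1 = m := h2
      rw [h1, h2', Nat.mod_self]
      exact hAm.symm
    · rw [h1, Nat.mod_eq_of_lt h2]
  have hbper : ∀ i, b (i + m) = b i := by
    intro i
    rw [hbdef]
    simp only []
    rw [Nat.add_mod_right]
  have hbinj : ∀ i j, π (b i) = π (b j) → i % m = j % m := by
    intro i j h
    rw [hπb, hπb] at h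
    exact AINJ _ (Nat.mod_lt i hm0) _ (Nat.mod_lt j hm0) h
  have hedge : ∀ i, s(π (b i), π (b (i+1))) ∈ c.edges := by
    intro i
    rw [hπb, hπb, hstep i]
    exact EDG (i % m) (Nat.mod_lt i hm0)
  have hb1 : ∀ i, b (i % m) = b i := by
    intro i
    rw [hbdef]
    simp only []
    rw [Nat.mod_mod_of_dvd i dvd_rfl]
  have hb2 : ∀ i, b (i % m + 1) = b (i + 1) := by
    intro i
    rw [hbdef]
    simp only []
    congr 1
    conv_rhs => rw [Nat.add_mod]
    rw [Nat.mod_eq_of_lt (show 1 < m by omega)]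
  have key' : ∀ j, ∃ t : ℕ, X.Adj (b j) ((σ ^ t) (b (j+1))) := by
    intro j
    obtain ⟨hne, x, y, hx, hy, hxy⟩ : A (j % m) ≠ A (j % m + 1) ∧
        ∃ x y : V, π x = A (j % m) ∧ π y = A (j % m + 1) ∧ X.Adj x y := hadjA (j % m) (Nat.mod_lt j hm0)
    have hxb : π x = π (b j) := by
      rw [hπb]
      exact hx
    have hyb : π y = π (b (j+1)) := by
      rw [hπb, hstep j]
      exact hy
    obtain ⟨k, hk⟩ := eq_pow_of_mk_eq σ hσ hp0 hxb
    obtain ⟨l, hl⟩ := eq_pow_of_mk_eq σ hσ hp0 hyb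
    refine ⟨k * (p - 1) + l, ?_⟩
    have h3 := adj_pow_of_adj σ hA (k * (p-1)) hxy
    rw [← hk, ← hl, inv_pow_apply σ hσ hp0 k (b j)] at h3
    rwa [← Equiv.Perm.mul_apply, ← pow_add] at h3
  set e : ℕ → ℕ := fun j => (key' j).choose with hedef
  set s : ℕ → ℕ := fun i => e (i % m) with hsdef
  have hsper : ∀ i, s (i + m) = s i := by
    intro i
    rw [hsdef]
    simp only []
    rw [Nat.add_mod_right]
  have hadj : ∀ i, X.Adj (b i) ((σ ^ s i) (b (i + 1))) := by
    intro i
    rw [← hb1 i, ← hb2 i]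
    exact (key' (i % m)).choose_spec
  -- common two-shift extraction
  have TS : ∀ (i0 : ℕ) (x y z : V), X.Adj x y → X.Adj x z → y ≠ z →
      π x = π (b i0) → π y = π (b (i0+1)) → π z = π (b (i0+1)) →
      ∃ t1 t2 : ℕ, X.Adj (b i0) ((σ ^ t1) (b (i0+1))) ∧
        X.Adj (b i0) ((σ ^ t2) (b (i0+1))) ∧ ((t1 : ZMod p) ≠ (t2 : ZMod p)) := by
    intro i0 x y z hxy hxz hyz hxb hyb hzb
    obtain ⟨k, hk⟩ := eq_pow_of_mk_eq σ hσ hp0 hxb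
    obtain ⟨l1, hl1⟩ := eq_pow_of_mk_eq σ hσ hp0 hyb
    obtain ⟨l2, hl2⟩ := eq_pow_of_mk_eq σ hσ hp0 hzb
    refine ⟨k * (p-1) + l1, k * (p-1) + l2, ?_, ?_, ?_⟩
    · have h3 := adj_pow_of_adj σ hA (k * (p-1)) hxy
      rw [← hk, ← hl1, inv_pow_apply σ hσ hp0 k (b i0)] at h3
      rwa [← Equiv.Perm.mul_apply, ← pow_add] at h3
    · have h3 := adj_pow_of_adj σ hA (k * (p-1)) hxz
      rw [← hk, ← hl2, inv_pow_apply σ hσ hp0 k (b i0)] at h3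
      rwa [← Equiv.Perm.mul_apply, ← pow_add] at h3
    · intro hcast
      apply hyz
      have h4 := (pow_cast_eq_iff σ hσ hp0 hmin (k*(p-1)+l1) (k*(p-1)+l2) (b (i0+1))).mpr hcast
      rw [pow_add, pow_add, Equiv.Perm.mul_apply, Equiv.Perm.mul_apply, hl1, hl2] at h4
      exact (Equiv.injective _ h4)
  by_cases hS : ((∑ i ∈ Finset.range m, s i : ℕ) : ZMod p) = 0
  swap
  · left
    exact lift_long_cycle σ X p m hp hσ hmin hA c hm3 b s hedge hbinj hbper hsper hadj hS
  by_cases hP : ∀ (a b1 b2 : V)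
      (B : Quotient (MulAction.orbitRel (Subgroup.zpowers σ) V)),
      s(π a, B) ∈ c.edges → π b1 = B → X.Adj a b1 → π b2 = B → X.Adj a b2 → b1 = b2
  · -- second disjunct
    right
    constructor
    · intro v
      obtain ⟨j, hj, hAj⟩ := SURJ (π v)
      have hvb : π v = π (b j) := by
        rw [hπb, Nat.mod_eq_of_lt hj, hAj]
      obtain ⟨k, hk⟩ := eq_pow_of_mk_eq σ hσ hp0 hvb
      exact lift_short_cycle σ X p m hp hσ hmin hA c hm3 b s hedge hbinj hbper hsper hadj hS
        v j k hk.symm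
    · intro a B hmem
      rw [Nat.card_eq_one_iff_exists]
      obtain ⟨hne, x, y, hx, hy, hxy⟩ : π a ≠ B ∧ ∃ x y : V, π x = π a ∧ π y = B ∧ X.Adj x y :=
        SimpleGraph.Walk.adj_of_mem_edges c hmem
      have hax : π a = π x := hx.symm
      obtain ⟨k, hk⟩ := eq_pow_of_mk_eq σ hσ hp0 hax
      have hb0B : π ((σ ^ k) y) = B := (pow_apply_orbit σ k y).trans hy
      have hab0 : X.Adj a ((σ ^ k) y) := by
        rw [← hk]
        exact adj_pow_of_adj σ hA k hxy
      refine ⟨⟨(σ ^ k) y, hb0B, hab0⟩, ?_⟩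
      rintro ⟨z, hzB, haz⟩
      have := hP a z ((σ ^ k) y) B hmem hzB haz hb0B hab0
      exact Subtype.ext this
  · -- first disjunct via modified shifts
    left
    push_neg at hP
    obtain ⟨a, b1, b2, B, hmem, hb1B, hab1, hb2B, hab2, hne12⟩ := hP
    obtain ⟨i, hi, heq⟩ := EDGmem _ hmem
    have hbn : π (b (i+1)) = A (i+1) := by
      rw [hπb, hstep i, Nat.mod_eq_of_lt hi]
    have hbi : π (b i) = A i := by
      rw [hπb, Nat.mod_eq_of_lt hi]
    rw [Sym2.eq_iff] at heq
    have hTS : ∃ t1 t2 : ℕ, X.Adj (b i) ((σ ^ t1) (b (i+1))) ∧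
        X.Adj (b i) ((σ ^ t2) (b (i+1))) ∧ ((t1 : ZMod p) ≠ (t2 : ZMod p)) := by
      rcases heq with ⟨hπa, hB⟩ | ⟨hπa, hB⟩
      · exact TS i a b1 b2 hab1 hab2 hne12 (by rw [hπa, ← hbi]) (by rw [hb1B, hB, ← hbn])
          (by rw [hb2B, hB, ← hbn])
      · -- reversed orientation
        have hbb : π b2 = π b1 := by rw [hb1B, hb2B]
        obtain ⟨d, hd⟩ := eq_pow_of_mk_eq σ hσ hp0 hbb
        have hz : X.Adj b1 ((σ ^ (d * (p-1))) a) := by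
          have h3 := adj_pow_of_adj σ hA (d * (p-1)) hab2.symm
          rw [← hd, inv_pow_apply σ hσ hp0 d b1] at h3
          exact h3
        have hyz : a ≠ (σ ^ (d * (p-1))) a := by
          intro hcon
          apply hne12
          have h5 : p ∣ d * (p-1) := hmin a _ hcon.symm
          have h6 : ((d * (p-1) : ℕ) : ZMod p) = 0 := by
            rw [ZMod.natCast_eq_zero_iff]
            exact h5
          push_cast [Nat.cast_sub (show 1 ≤ p by omega)] at h6
          rw [ZMod.natCast_self] at h6
          have h7 : (d : ZMod p) = 0 := by
            have h8 : (d : ZMod p) * (0 - 1) = 0 := h6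
            rcases mul_eq_zero.mp h8 with h9 | h9
            · exact h9
            · exfalso
              simp only [zero_sub, neg_eq_zero] at h9
              exact one_ne_zero h9
          have h10 : (σ ^ d) b1 = (σ ^ 0) b1 := by
            rw [pow_cast_eq_iff σ hσ hp0 hmin]
            simpa using h7
          rw [hd] at h10
          simpa using h10.symm
        exact TS i b1 a ((σ ^ (d * (p-1))) a) hab1.symm hz hyz
          (by rw [hb1B, hB, ← hbi]) (by rw [hπa, ← hbn])
          ((pow_apply_orbit σ (d*(p-1)) a).trans (hπa.trans hbn.symm))
    obtain ⟨t1, t2, hadjt1, hadjt2, htne⟩ := hTS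
    set t' : ℕ := if (t1 : ZMod p) = ((s i : ℕ) : ZMod p) then t2 else t1 with ht'def
    have hadjt' : X.Adj (b i) ((σ ^ t') (b (i+1))) := by
      rw [ht'def]
      split
      · exact hadjt2
      · exact hadjt1
    have ht'ne : ((t' : ℕ) : ZMod p) ≠ ((s i : ℕ) : ZMod p) := by
      rw [ht'def]
      split
      · rename_i h
        rw [← h]
        exact htne.symm
      · rename_i h
        exact h
    set s2 : ℕ → ℕ := fun i' => if i' % m = i then t' else s i' with hs2def
    have hsper2 : ∀ i', s2 (i' + m) = s2 i' := by
      intro i'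
      rw [hs2def]
      simp only []
      rw [Nat.add_mod_right, hsper i']
    have hadj2 : ∀ i', X.Adj (b i') ((σ ^ s2 i') (b (i' + 1))) := by
      intro i'
      rw [hs2def]
      simp only []
      by_cases h : i' % m = i
      · rw [if_pos h]
        have hbi' : b i' = b i := by rw [← hb1 i', h]
        have hbi'1 : b (i' + 1) = b (i + 1) := by rw [← hb2 i', h]
        rw [hbi', hbi'1]
        exact hadjt'
      · rw [if_neg h]
        exact hadj i'
    have hS2 : ((∑ i' ∈ Finset.range m, s2 i' : ℕ) : ZMod p) ≠ 0 := by
      have hmemi : i ∈ Finset.range m := Finset.mem_range.mpr hi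
      have h1 : ∑ i' ∈ Finset.range m, s2 i'
          = ∑ i' ∈ Finset.range m \ {i}, s2 i' + s2 i :=
        Finset.sum_eq_sum_sdiff_singleton_add hmemi _
      have h2 : ∑ i' ∈ Finset.range m, s i'
          = ∑ i' ∈ Finset.range m \ {i}, s i' + s i :=
        Finset.sum_eq_sum_sdiff_singleton_add hmemi _
      have h3 : ∑ i' ∈ Finset.range m \ {i}, s2 i' = ∑ i' ∈ Finset.range m \ {i}, s i' := by
        refine Finset.sum_congr rfl ?_
        intro x hx
        rw [Finset.mem_sdiff, Finset.mem_range, Finset.mem_singleton] at hx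
        rw [hs2def]
        simp only []
        rw [Nat.mod_eq_of_lt hx.1, if_neg hx.2]
      have h4 : s2 i = t' := by
        rw [hs2def]
        simp only []
        rw [Nat.mod_eq_of_lt hi, if_pos rfl]
      rw [h2] at hS
      push_cast at hS
      rw [h1, h3, h4]
      push_cast
      intro hcon
      apply ht'ne
      have e1 : ∑ x ∈ Finset.range m \ {i}, ((s x : ℕ) : ZMod p)
          = - ((s i : ℕ) : ZMod p) := by linear_combination hS
      rw [e1] at hcon
      linear_combination hcon
    exact lift_long_cycle σ X p m hp hσ hmin hA c hm3 b s2 hedge hbinj hbper hsper2 hadj2 hS2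
end
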